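/- Let n ≥ k ≥ 1 be integers and let S be a nonempty family of k-element subsets of [n] = {1,…,n}, and let a be the k-binomial decomposition of m = |S|. Then for each integer i with 1 ≤ i ≤ k−1, the i-fold iterated shadow satisfies |Δ^i(S)| ≥ B(a, k−i). -/

import Mathlib

/-- Generalized binomial coefficient `C(n, j)`:
`C(n,j) = n(n-1)⋯(n-j+1)/j!` for `j ≥ 0` and `C(n,j) = 0` for `j < 0`. -/
def C (n j : ℤ) : ℤ :=
  if 0 ≤ j then
    if 0 ≤ n then ((n.toNat.choose j.toNat : ℕ) : ℤ)
    else (-1) ^ j.toNat * (((j - n - 1).toNat.choose j.toNat : ℕ) : ℤ)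
  else 0

/-- `B a k = Σ_l C(a_l, k - l)`. -/
def B : List ℤ → ℤ → ℤ
  | [], _ => 0
  | x :: xs, k => C x k + B xs (k - 1)

lemma C_zero (x : ℤ) : C x 0 = 1 := by
  by_cases hx : 0 ≤ x <;> simp [C, hx]

lemma C_of_neg {x j : ℤ} (hj : j < 0) : C x j = 0 := by simp [C, not_le.2 hj]

lemma C_of_nonneg {x j : ℤ} (hx : 0 ≤ x) (hj : 0 ≤ j) :
    C x j = (x.toNat.choose j.toNat : ℤ) := by simp [C, hx, hj]

lemma C_nat (x j : ℕ) : C x j = (x.choose j : ℤ) := by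
  rw [C_of_nonneg (by positivity) (by positivity)]; simp

lemma C_nonneg {x j : ℤ} (hx : 0 ≤ x) : 0 ≤ C x j := by
  rcases le_or_gt 0 j with hj | hj
  · rw [C_of_nonneg hx hj]; positivity
  · rw [C_of_neg hj]

lemma C_pos {x j : ℤ} (hj : 0 ≤ j) (hx : j ≤ x) : 1 ≤ C x j := by
  rw [C_of_nonneg (hj.trans hx) hj]
  have : j.toNat ≤ x.toNat := Int.toNat_le_toNat hx
  exact_mod_cast Nat.one_le_iff_ne_zero.2 (Nat.choose_pos this).ne'

lemma C_mono {x y j : ℤ} (hx : 0 ≤ x) (hxy : x ≤ y) : C x j ≤ C y j := by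
  rcases le_or_gt 0 j with hj | hj
  · rw [C_of_nonneg hx hj, C_of_nonneg (hx.trans hxy) hj]
    exact_mod_cast Nat.choose_le_choose _ (Int.toNat_le_toNat hxy)
  · simp [C_of_neg hj]

lemma C_pascal {x j : ℤ} (hx : 1 ≤ x) (hj : 1 ≤ j) :
    C x j = C (x - 1) (j - 1) + C (x - 1) j := by
  lift x to ℕ using by omega
  lift j to ℕ using by omega
  obtain ⟨p, rfl⟩ : ∃ p, x = p + 1 := ⟨x - 1, by omega⟩
  obtain ⟨q, rfl⟩ : ∃ q, j = q + 1 := ⟨j - 1, by omega⟩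
  push_cast
  rw [show ((p : ℤ) + 1 - 1) = (p : ℕ) by push_cast; ring,
    show ((q : ℤ) + 1 - 1) = (q : ℕ) by push_cast; ring,
    show ((p : ℤ) + 1) = ((p + 1 : ℕ) : ℤ) by push_cast; ring,
    show ((q : ℤ) + 1) = ((q + 1 : ℕ) : ℤ) by push_cast; ring,
    C_nat, C_nat, C_nat, Nat.choose_succ_succ]
  push_cast; ring

lemma B_neg : ∀ (z : List ℤ) {j : ℤ}, j < 0 → B z j = 0
  | [], _, _ => rfl
  | x :: xs, j, hj => by
    rw [B, C_of_neg hj, B_neg xs (by omega)]; ring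

lemma B_append : ∀ (u v : List ℤ) (j : ℤ), B (u ++ v) j = B u j + B v (j - u.length)
  | [], v, j => by simp [B]
  | x :: xs, v, j => by
    rw [List.cons_append, B, B, B_append xs v (j - 1), List.length_cons]
    push_cast; ring

lemma B_nonneg : ∀ (z : List ℤ), (∀ x ∈ z, 0 ≤ x) → ∀ j : ℤ, 0 ≤ B z j
  | [], _, _ => le_refl _
  | x :: xs, h, j => by
    rw [B]
    have h1 := C_nonneg (j := j) (h x (by simp))
    have h2 := B_nonneg xs (fun y hy => h y (by simp [hy])) (j - 1)
    omega

lemma B_take : ∀ (z : List ℤ) (j : ℕ), j < z.length → B z (j : ℤ) = B (z.take j) (j : ℤ) + 1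
  | [], j, hj => by simp at hj
  | x :: xs, 0, _ => by
    simp [B, C_zero, B_neg xs (by norm_num : (-1:ℤ) < 0)]
  | x :: xs, j + 1, hj => by
    have ih := B_take xs j (by simpa using hj)
    simp only [List.take_succ_cons, B]
    push_cast
    rw [show ((j : ℤ) + 1 - 1) = (j : ℤ) by ring, ih]
    ring

def runL (c : ℤ) (r : ℕ) : List ℤ := (List.range r).map (fun j : ℕ => c - 1 - (j : ℤ))

lemma runL_succ (c : ℤ) (r : ℕ) : runL c (r + 1) = (c - 1) :: runL (c - 1) r := by
  simp only [runL, List.range_succ_eq_map, List.map_cons, List.map_map, Nat.cast_zero, sub_zero]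
  congr 1
  apply List.map_congr_left
  intro j hj
  simp only [Function.comp_apply]
  push_cast; ring

@[simp] lemma runL_length (c : ℤ) (r : ℕ) : (runL c r).length = r := by
  rw [runL, List.length_map, List.length_range]

lemma runL_mem {c : ℤ} {r : ℕ} {x : ℤ} (hx : x ∈ runL c r) : c - r ≤ x ∧ x ≤ c - 1 := by
  rw [runL, List.mem_map] at hx
  obtain ⟨j, hj, rfl⟩ := hx
  rw [List.mem_range] at hj
  omega

lemma runL_pairwise (c : ℤ) (r : ℕ) : (runL c r).Pairwise (· > ·) := by
  rw [runL, List.pairwise_map]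
  refine (List.pairwise_lt_range (n := r)).imp ?_
  intro a b h
  show c - 1 - (a : ℤ) > c - 1 - (b : ℤ)
  omega

lemma hockey : ∀ (r : ℕ) (c : ℤ), (r : ℤ) ≤ c → 1 + B (runL c r) (r : ℤ) = C c r
  | 0, c, _ => by simp [runL, B, C_zero]
  | r + 1, c, hc => by
    have ih := hockey r (c - 1) (by push_cast at hc ⊢; omega)
    rw [runL_succ, B]
    push_cast
    rw [show ((r : ℤ) + 1 - 1) = (r : ℤ) by ring]
    have hp : C c ((r : ℤ) + 1) = C (c - 1) ((r:ℤ) + 1 - 1) + C (c - 1) ((r:ℤ) + 1) := by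
      apply C_pascal (by push_cast at hc; omega) (by omega)
    rw [show ((r : ℤ) + 1 - 1) = (r : ℤ) by ring] at hp
    rw [hp, ← ih]
    ring

open Finset Finset.Colex

variable {n : ℕ}

/-- The finset of `Fin n` whose (integer) values lie in `d`. -/
def fsetZ (n : ℕ) (d : List ℤ) : Finset (Fin n) :=
  Finset.univ.filter (fun y => ((y : ℕ) : ℤ) ∈ d)

lemma mem_fsetZ {d : List ℤ} {y : Fin n} : y ∈ fsetZ n d ↔ ((y : ℕ) : ℤ) ∈ d := by
  simp [fsetZ]

@[simp] lemma fsetZ_nil : fsetZ n [] = ∅ := by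
  ext y; simp [mem_fsetZ]

lemma fsetZ_cons (xm : Fin n) (xs : List ℤ) :
    fsetZ n (((xm : ℕ) : ℤ) :: xs) = insert xm (fsetZ n xs) := by
  ext y
  simp only [mem_fsetZ, List.mem_cons, mem_insert]
  constructor
  · rintro (h | h)
    · left
      have : (y : ℕ) = (xm : ℕ) := by exact_mod_cast h
      exact Fin.val_injective this
    · exact Or.inr h
  · rintro (rfl | h)
    · exact Or.inl rfl
    · exact Or.inr h

lemma exists_fin_of_range {x : ℤ} (hx : 0 ≤ x) (hxn : x < n) :
    ∃ xm : Fin n, ((xm : ℕ) : ℤ) = x := by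
  refine ⟨⟨x.toNat, by omega⟩, by simp; omega⟩

lemma card_fsetZ : ∀ (d : List ℤ), d.Nodup → (∀ x ∈ d, 0 ≤ x ∧ x < n) →
    (fsetZ n d).card = d.length
  | [], _, _ => by simp
  | x :: xs, hd, hr => by
    obtain ⟨hx0, hxn⟩ := hr x (by simp)
    obtain ⟨xm, rfl⟩ := exists_fin_of_range hx0 hxn
    rw [fsetZ_cons, card_insert_of_notMem, card_fsetZ xs hd.of_cons
      (fun y hy => hr y (by simp [hy])), List.length_cons]
    intro hmem
    exact (List.nodup_cons.1 hd).1 (mem_fsetZ.1 hmem)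

lemma initSeg_empty_eq : initSeg (∅ : Finset (Fin n)) = {∅} := by
  ext t
  simp only [mem_initSeg, mem_singleton, card_empty]
  constructor
  · rintro ⟨h, -⟩
    exact (card_eq_zero.1 h.symm)
  · rintro rfl
    simp

lemma card_initSeg_fsetZ : ∀ (d : List ℤ), d.Pairwise (· > ·) →
    (∀ x ∈ d, 0 ≤ x ∧ x < n) →
    ((initSeg (fsetZ n d)).card : ℤ) = 1 + B d d.length
  | [], _, _ => by simp [initSeg_empty_eq, B]
  | x :: xs, hd, hr => by
    obtain ⟨hx0, hxn⟩ := hr x (by simp)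
    obtain ⟨xm, rfl⟩ := exists_fin_of_range hx0 hxn
    have hxgt : ∀ y ∈ xs, y < ((xm : ℕ) : ℤ) := fun y hy => (List.pairwise_cons.1 hd).1 y hy
    have hpxs : xs.Pairwise (· > ·) := (List.pairwise_cons.1 hd).2
    have hrxs : ∀ x ∈ xs, 0 ≤ x ∧ x < n := fun y hy => hr y (by simp [hy])
    set s' := fsetZ n xs with hs'
    have hlt' : ∀ z ∈ s', z < xm := by
      intro z hz
      have := hxgt _ (mem_fsetZ.1 hz)
      have : (z : ℕ) < (xm : ℕ) := by exact_mod_cast this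
      exact this
    have hxm : xm ∉ s' := fun h => lt_irrefl _ (hlt' _ h)
    have hcard' : s'.card = xs.length := card_fsetZ xs (hpxs.imp ne_of_gt) hrxs
    have hxu : ∀ u ∈ initSeg s', xm ∉ u := by
      intro u hu hx
      obtain ⟨-, hle⟩ := mem_initSeg.1 hu
      exact lt_irrefl xm (forall_lt_mono hle hlt' xm hx)
    have key : initSeg (insert xm s') =
        powersetCard (xs.length + 1) (Finset.Iio xm) ∪ (initSeg s').image (insert xm) := by
      ext t
      simp only [mem_initSeg, mem_union, mem_powersetCard, mem_image,
        card_insert_of_notMem hxm, hcard']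
      constructor
      · rintro ⟨hcardt, hle⟩
        by_cases hxt : xm ∈ t
        · right
          refine ⟨t.erase xm, ⟨?_, ?_⟩, insert_erase hxt⟩
          · rw [card_erase_of_mem hxt, ← hcardt]; omega
          · have h2 := (toColex_sdiff_le_toColex_sdiff
              (by simpa using hxt) (by simp : {xm} ⊆ insert xm s')).2 hle
            rwa [sdiff_singleton_eq_erase, sdiff_singleton_eq_erase,
              erase_insert hxm] at h2
        · left
          refine ⟨fun z hz => mem_Iio.2 ?_, hcardt.symm⟩
          have hall : ∀ b ∈ t, b ≤ xm := by
            refine forall_le_mono hle ?_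
            intro b hb
            rcases mem_insert.1 hb with rfl | hb
            · exact le_refl _
            · exact (hlt' b hb).le
          exact (hall z hz).lt_of_ne (ne_of_mem_of_not_mem hz hxt)
      · rintro (⟨hsub, hcardt⟩ | ⟨u, hu, rfl⟩)
        · refine ⟨hcardt.symm, le_of_lt (toColex_lt_toColex_iff_exists_forall_lt.2
            ⟨xm, mem_insert_self _ _, ?_, ?_⟩)⟩
          · intro h; exact lt_irrefl xm (mem_Iio.1 (hsub h))
          · intro b hb _; exact mem_Iio.1 (hsub hb)
        · obtain ⟨hucard, hule⟩ := hu
          have hxu' : xm ∉ u :=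
            hxu u (mem_initSeg.2 ⟨by rw [hcard']; exact hucard, hule⟩)
          refine ⟨?_, ?_⟩
          · rw [card_insert_of_notMem hxu', ← hucard]
          · have := (toColex_sdiff_le_toColex_sdiff
              (by simp : {xm} ⊆ insert xm u) (by simp : {xm} ⊆ insert xm s'))
            rw [sdiff_singleton_eq_erase, sdiff_singleton_eq_erase,
              erase_insert hxu', erase_insert hxm] at this
            exact this.1 hule
    have hdisj : Disjoint (powersetCard (xs.length + 1) (Finset.Iio xm))
        ((initSeg s').image (insert xm)) := by
      rw [disjoint_left]
      rintro t ht ht'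
      obtain ⟨u, hu, rfl⟩ := mem_image.1 ht'
      have := (mem_powersetCard.1 ht).1 (mem_insert_self xm u)
      exact lt_irrefl xm (mem_Iio.1 this)
    have hinj : Set.InjOn (insert xm) (initSeg s' : Set (Finset (Fin n))) := by
      intro u1 h1 u2 h2 h
      rw [← erase_insert (hxu u1 h1), h, erase_insert (hxu u2 h2)]
    rw [show fsetZ n (((xm : ℕ) : ℤ) :: xs) = insert xm s' from fsetZ_cons xm xs,
      key, card_union_of_disjoint hdisj, card_powersetCard, Fin.card_Iio,
      card_image_of_injOn hinj]
    have ih := card_initSeg_fsetZ xs hpxs hrxs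
    push_cast
    rw [ih, List.length_cons, B]
    push_cast
    rw [show ((xs.length : ℤ) + 1 - 1) = (xs.length : ℤ) by ring]
    rw [show (((xm : ℕ) : ℤ)) = ((xm : ℕ) : ℤ) from rfl]
    rw [show ((xs.length : ℤ) + 1) = ((xs.length + 1 : ℕ) : ℤ) by push_cast; ring, C_nat]
    push_cast
    ring

lemma getLast_min : ∀ (d : List ℤ) (h : d ≠ []), d.Pairwise (· > ·) →
    ∀ z ∈ d, d.getLast h ≤ z
  | [x], _, _, z, hz => by
    simp only [List.mem_singleton] at hz
    subst hz; simp
  | x :: y :: rest, _, hp, z, hz => by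
    rw [List.getLast_cons (by simp)]
    rcases List.mem_cons.1 hz with rfl | hz'
    · exact le_of_lt ((List.pairwise_cons.1 hp).1 _ (List.getLast_mem _))
    · exact getLast_min (y :: rest) (by simp) (List.pairwise_cons.1 hp).2 z hz'

lemma head_max : ∀ (d : List ℤ) (h : d ≠ []), d.Pairwise (· > ·) →
    ∀ z ∈ d, z ≤ d.head h
  | x :: rest, _, hp, z, hz => by
    rcases List.mem_cons.1 hz with rfl | hz'
    · simp
    · exact le_of_lt ((List.pairwise_cons.1 hp).1 z hz')

lemma shadow_initSeg_fsetZ (d : List ℤ) (hne : d ≠ []) (hp : d.Pairwise (· > ·))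
    (hr : ∀ x ∈ d, 0 ≤ x ∧ x < n) :
    Finset.shadow (initSeg (fsetZ n d)) = initSeg (fsetZ n d.dropLast) := by
  classical
  set c := d.getLast hne with hc
  have hcd : c ∈ d := List.getLast_mem hne
  obtain ⟨hc0, hcn⟩ := hr c hcd
  obtain ⟨cm, hcm⟩ := exists_fin_of_range hc0 hcn
  have hcmem : cm ∈ fsetZ n d := mem_fsetZ.2 (hcm ▸ hcd)
  have hsne : (fsetZ n d).Nonempty := ⟨cm, hcmem⟩
  have hmin : (fsetZ n d).min' hsne = cm := by
    refine le_antisymm (min'_le _ _ hcmem) (le_min' _ _ _ ?_)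
    intro y hy
    have h1 : c ≤ ((y : ℕ) : ℤ) := getLast_min d hne hp _ (mem_fsetZ.1 hy)
    have h2 : (cm : ℕ) ≤ (y : ℕ) := by omega
    exact Fin.le_def.2 h2
  have herase : (fsetZ n d).erase cm = fsetZ n d.dropLast := by
    have hnodup : d.Nodup := hp.imp ne_of_gt
    have hcnotin : c ∉ d.dropLast := by
      intro hmem
      have := List.dropLast_append_getLast hne
      have hnd := hnodup
      rw [← this] at hnd
      rcases List.nodup_append.1 hnd with ⟨-, -, hdisj⟩
      exact hdisj c hmem c (by simp [hc]) rfl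
    ext y
    simp only [mem_erase, mem_fsetZ]
    constructor
    · rintro ⟨hne', hy⟩
      have : ((y : ℕ) : ℤ) ∈ d.dropLast ++ [c] := by
        rw [List.dropLast_append_getLast hne] at *
        exact hy
      rcases List.mem_append.1 this with h | h
      · exact h
      · exfalso
        apply hne'
        have : ((y : ℕ) : ℤ) = c := by simpa using h
        apply Fin.val_injective
        omega
    · intro hy
      refine ⟨?_, ?_⟩
      · rintro rfl
        exact hcnotin (hcm ▸ hy)
      · exact (List.dropLast_sublist d).subset hy
  rw [← herase, ← hmin]
  convert shadow_initSeg hsne using 2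

lemma iter_shadow_initSeg_fsetZ : ∀ (i : ℕ) (d : List ℤ), d.Pairwise (· > ·) →
    (∀ x ∈ d, 0 ≤ x ∧ x < n) → i < d.length →
    Finset.shadow^[i] (initSeg (fsetZ n d)) = initSeg (fsetZ n (d.take (d.length - i)))
  | 0, d, _, _, _ => by simp
  | i + 1, d, hp, hr, hlen => by
    rw [Function.iterate_succ_apply, shadow_initSeg_fsetZ d (by
        intro h; rw [h] at hlen; simp at hlen) hp hr]
    have hsub : d.dropLast.Sublist d := List.dropLast_sublist d
    have := iter_shadow_initSeg_fsetZ i d.dropLast (hp.sublist hsub)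
      (fun x hx => hr x (hsub.mem hx)) (by rw [List.length_dropLast]; omega)
    rw [this]
    have heq : List.take (d.dropLast.length - i) d.dropLast
        = List.take (d.length - (i + 1)) d := by
      rw [List.length_dropLast, List.dropLast_eq_take, List.take_take]
      congr 1
      omega
    rw [heq]

/-- `a` has the shape of a `k`-binomial decomposition: strictly decreasing,
length at most `k`, and `a_i ≥ k - i` for every index. -/
def IsKBinomSeq (k : ℕ) (a : List ℤ) : Prop :=
  a.Chain' (· > ·) ∧ a.length ≤ k ∧ ∀ i < a.length, (k : ℤ) - i ≤ a.getD i 0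

/-- `a` is the `k`-binomial decomposition of `m`. -/
def IsKBinom (k : ℕ) (m : ℤ) (a : List ℤ) : Prop :=
  IsKBinomSeq k a ∧ m = B a (k : ℤ)

/-- Non-strict lexicographic order on integer sequences. -/
def lexLE (x y : List ℤ) : Prop := x = y ∨ List.Lex (· < ·) x y


/-- Kruskal–Katona: for a nonempty family `S` of `k`-subsets of `[n]` with
`k`-binomial decomposition `a` of `|S|`, for each `1 ≤ i ≤ k-1` the `i`-fold
iterated shadow satisfies `|Δ^i(S)| ≥ B(a, k-i)`. -/
theorem kruskal_katona_iterated_shadow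
    (n k : ℕ) (hk : 1 ≤ k) (hkn : k ≤ n)
    (S : Finset (Finset (Fin n))) (hS : S.Nonempty) (hScard : ∀ X ∈ S, X.card = k)
    (a : List ℤ) (ha : IsKBinom k (S.card : ℤ) a)
    (i : ℕ) (hi1 : 1 ≤ i) (hik : i ≤ k - 1) :
    B a ((k : ℤ) - i) ≤ ((Finset.shadow^[i] S).card : ℤ) := by
  classical
  obtain ⟨⟨hchain, hlen, hbound⟩, hm⟩ := ha
  have hpair : a.Pairwise (· > ·) := List.isChain_iff_pairwise.1 hchain
  have hSpos : 0 < S.card := card_pos.2 hS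
  -- a is nonempty
  have hne : a ≠ [] := by
    rintro rfl
    rw [show B [] (k : ℤ) = 0 from rfl] at hm
    omega
  obtain ⟨x, xs, rfl⟩ := List.exists_cons_of_ne_nil hne
  set a : List ℤ := x :: xs with haeq
  have hb : ∀ l, (hl : l < a.length) → (k : ℤ) - l ≤ a[l] := by
    intro l hl
    have := hbound l hl
    rwa [List.getD_eq_getElem?_getD, List.getElem?_eq_getElem hl] at this
  have hpos1 : ∀ z ∈ a, 1 ≤ z := by
    intro z hz
    obtain ⟨l, hl, rfl⟩ := List.mem_iff_getElem.1 hz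
    have h1 := hb l hl
    have h2 : l < k := lt_of_lt_of_le hl hlen
    have : ((l : ℤ)) < (k : ℤ) := by exact_mod_cast h2
    omega
  -- |S| ≤ choose n k
  have hSle : S.card ≤ n.choose k := by
    have hsub : S ⊆ powersetCard k univ :=
      fun X hX => mem_powersetCard.2 ⟨subset_univ X, hScard X hX⟩
    have := card_le_card hsub
    rwa [card_powersetCard, card_univ, Fintype.card_fin] at this
  have hBxs0 : 0 ≤ B xs ((k : ℤ) - 1) :=
    B_nonneg xs (fun z hz => by have := hpos1 z (by simp [haeq, hz]); omega) _
  have hmB : (S.card : ℤ) = C x k + B xs ((k : ℤ) - 1) := by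
    rw [hm]; rfl
  -- head bound
  have hxle : x ≤ (n : ℤ) := by
    by_contra hcon
    push_neg at hcon
    have h1 : C ((n + 1 : ℕ) : ℤ) k ≤ C x k := C_mono (by positivity) (by exact_mod_cast hcon)
    rw [C_nat] at h1
    have h2 : n.choose k < (n + 1).choose k := by
      obtain ⟨k', rfl⟩ : ∃ k', k = k' + 1 := ⟨k - 1, by omega⟩
      have h5 := Nat.choose_succ_succ' n k'
      have h6 := Nat.choose_pos (show k' ≤ n by omega)
      omega
    have h3 : ((n.choose k : ℕ) : ℤ) < C x k := by
      calc ((n.choose k : ℕ) : ℤ) < ((n + 1).choose k : ℤ) := by exact_mod_cast h2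
      _ ≤ C x k := h1
    have h4 : (S.card : ℤ) ≤ ((n.choose k : ℕ) : ℤ) := by exact_mod_cast hSle
    omega
  have hxlt : xs ≠ [] → x < (n : ℤ) := by
    intro hxs
    obtain ⟨y, xs', rfl⟩ := List.exists_cons_of_ne_nil hxs
    have hy : (k : ℤ) - 1 ≤ y := by
      have := hb 1 (by simp [haeq])
      simpa [haeq] using this
    have hCy : 1 ≤ C y ((k : ℤ) - 1) := by
      apply C_pos _ hy
      have : (1 : ℤ) ≤ (k : ℤ) := by exact_mod_cast hk
      omega
    have hBxs' : 0 ≤ B xs' ((k : ℤ) - 1 - 1) :=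
      B_nonneg xs' (fun z hz => by have := hpos1 z (by simp [haeq, hz]); omega) _
    have hBcons : B (y :: xs') ((k : ℤ) - 1) = C y ((k : ℤ) - 1) + B xs' ((k : ℤ) - 1 - 1) := rfl
    by_contra hcon
    push_neg at hcon
    have hxn : x = (n : ℤ) := le_antisymm hxle hcon
    have hCx : C x k = (n.choose k : ℤ) := by
      rw [hxn, show ((n : ℕ) : ℤ) = ((n : ℕ) : ℤ) from rfl, C_nat]
    have h4 : (S.card : ℤ) ≤ ((n.choose k : ℕ) : ℤ) := by exact_mod_cast hSle
    rw [hmB, hCx, hBcons] at *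
    omega
  -- set up dInt
  set c : ℤ := a.getLast (by simp [haeq]) with hc
  set a' : List ℤ := a.dropLast with ha'
  set t : ℕ := a'.length with ht
  have hta : a.length = t + 1 := by
    rw [ht, ha', List.length_dropLast, haeq]; simp
  have htk : t + 1 ≤ k := by omega
  set r : ℕ := k - t with hr
  have htr : t + r = k := by omega
  have hcindex : c = a[t]'(by omega) := by
    rw [hc, List.getLast_eq_getElem]
    congr 1
    omega
  have hc_lb : (r : ℤ) ≤ c := by
    have h1 := hb t (by omega)
    rw [← hcindex] at h1
    have : ((t : ℤ)) + (r : ℤ) = (k : ℤ) := by exact_mod_cast htr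
    omega
  have hc_pos : 1 ≤ c := hpos1 c (List.getLast_mem _)
  have hchead : c ≤ x := getLast_min a (by simp [haeq]) hpair x (by simp [haeq])
  have hsplit : a' ++ [c] = a := List.dropLast_append_getLast (by simp [haeq])
  have hcross : ∀ z ∈ a', c < z := by
    intro z hz
    have hp2 : (a' ++ [c]).Pairwise (· > ·) := by rw [hsplit]; exact hpair
    exact (List.pairwise_append.1 hp2).2.2 z hz c (by simp)
  have hra' : ∀ z ∈ a', 0 ≤ z ∧ z < (n : ℤ) := by
    intro z hz
    have hz1 : 1 ≤ z := hpos1 z ((List.dropLast_sublist a).mem hz)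
    have hxs : xs ≠ [] := by
      rintro rfl
      rw [ha', haeq] at hz
      simp at hz
    have hzx : z ≤ x := head_max a (by simp [haeq]) hpair z ((List.dropLast_sublist a).mem hz)
    exact ⟨by omega, lt_of_le_of_lt hzx (hxlt hxs)⟩
  set dInt : List ℤ := a' ++ runL c r with hd
  have hdlen : dInt.length = k := by
    rw [hd, List.length_append, runL_length, ← ht]; omega
  have hdpair : dInt.Pairwise (· > ·) := by
    rw [hd, List.pairwise_append]
    have hp2 : (a' ++ [c]).Pairwise (· > ·) := by rw [hsplit]; exact hpair
    refine ⟨hp2.sublist (List.sublist_append_left _ _), runL_pairwise c r, ?_⟩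
    intro z hz w hw
    have h1 := hcross z hz
    have h2 := (runL_mem hw).2
    omega
  have hdr : ∀ z ∈ dInt, 0 ≤ z ∧ z < (n : ℤ) := by
    intro z hz
    rcases List.mem_append.1 hz with h | h
    · exact hra' z h
    · obtain ⟨h1, h2⟩ := runL_mem h
      constructor
      · omega
      · have : c ≤ (n : ℤ) := hchead.trans hxle
        omega
  -- identity 1 : (S.card : ℤ) = 1 + B dInt k
  have hBsplit : ∀ j : ℤ, B a j = B a' j + C c (j - t) := by
    intro j
    conv_lhs => rw [← hsplit]
    rw [B_append, ← ht]
    have : B [c] (j - (t : ℤ)) = C c (j - t) + B [] (j - t - 1) := rfl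
    rw [this]
    simp [B]
  have hrk : ((r : ℕ) : ℤ) = (k : ℤ) - t := by
    have : ((t : ℤ)) + (r : ℤ) = (k : ℤ) := by exact_mod_cast htr
    omega
  have hid1 : (S.card : ℤ) = 1 + B dInt (k : ℤ) := by
    rw [hd, B_append, ← ht, hm, hBsplit]
    have hhock := hockey r c hc_lb
    rw [hrk] at hhock
    omega
  -- identity 2
  set q : ℕ := k - i with hq
  have hqk : (q : ℤ) = (k : ℤ) - i := by
    have h1 : i ≤ k := by omega
    omega
  have hid2 : B a ((k : ℤ) - i) = 1 + B (dInt.take q) (q : ℤ) := by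
    rcases le_or_gt t q with hqt | hqt
    · -- q = t + r', with r' ≤ r
      set r' : ℕ := q - t with hr'
      have hqtr : q = t + r' := by omega
      have hr'r : r' ≤ r := by omega
      have htake : dInt.take q = a' ++ runL c r' := by
        rw [hd, hqtr, ht, List.take_length_add_append]
        congr 1
        rw [runL, runL, ← List.map_take, List.take_range, min_eq_left hr'r]
      have hr'k : ((r' : ℕ) : ℤ) = (q : ℤ) - t := by
        have : ((t : ℤ)) + (r' : ℤ) = (q : ℤ) := by exact_mod_cast hqtr.symm
        omega
      have hhock := hockey r' c (le_trans (by exact_mod_cast hr'r) hc_lb)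
      rw [hr'k] at hhock
      rw [← hqk, htake, B_append, ← ht, hBsplit]
      omega
    · -- q < t
      have htake : dInt.take q = a.take q := by
        rw [hd, List.take_append_of_le_length (by omega), ← hsplit,
          List.take_append_of_le_length (by omega)]
      have hq1 : q < a.length := by omega
      have := B_take a q hq1
      rw [htake, ← hqk, this]
      ring
  -- Kruskal-Katona
  set s : Finset (Fin n) := fsetZ n dInt with hs
  have hscard : s.card = k := by
    rw [hs, card_fsetZ dInt (hdpair.imp ne_of_gt) hdr, hdlen]
  have hCcard : ((initSeg s).card : ℤ) = (S.card : ℤ) := by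
    rw [hs, card_initSeg_fsetZ dInt hdpair hdr, hdlen, hid1]
  have hCcard' : (initSeg s).card = S.card := by exact_mod_cast hCcard
  have hsized : (S : Set (Finset (Fin n))).Sized k := fun X hX => hScard X hX
  have hinit : IsInitSeg (initSeg s) k := by
    have := isInitSeg_initSeg (s := s)
    rwa [hscard] at this
  have hKK : (Finset.shadow^[i] (initSeg s)).card ≤ (Finset.shadow^[i] S).card := by
    have := Finset.iterated_kk (n := n) (r := k) (k := i) hsized (le_of_eq hCcard') hinit
    convert this using 2 <;> congr!
  -- compute LHS
  have hiter : Finset.shadow^[i] (initSeg s) = initSeg (fsetZ n (dInt.take q)) := by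
    rw [hs, iter_shadow_initSeg_fsetZ i dInt hdpair hdr (by omega), hdlen]
  have htlen : (dInt.take q).length = q := by
    rw [List.length_take, hdlen]; omega
  have hfinal : ((Finset.shadow^[i] (initSeg s)).card : ℤ) = B a ((k : ℤ) - i) := by
    rw [hiter, card_initSeg_fsetZ (dInt.take q)
      (hdpair.sublist (List.take_sublist _ _))
      (fun z hz => hdr z ((List.take_sublist _ _).mem hz)), htlen, hid2]
  calc B a ((k : ℤ) - i) = ((Finset.shadow^[i] (initSeg s)).card : ℤ) := hfinal.symm
  _ ≤ ((Finset.shadow^[i] S).card : ℤ) := by exact_mod_cast hKK
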